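/- If a pinpointing state B^pin is obtained from a pinpointing state A^pin by a single pinpointing application of a rule R (A^pin ⇀_R B^pin), then for every valuation V, either the projection A_V is transformed into B_V by a (classical) application of R (A_V →_R B_V), or A_V = B_V. -/

import Mathlib

/-- Monotone Boolean formulas over propositional variables of type `V`. -/
inductive MBF (V : Type) : Type
  | var : V → MBF V
  | top : MBF V
  | bot : MBF V
  | and : MBF V → MBF V → MBF V
  | or  : MBF V → MBF V → MBF V

/-- Satisfaction of a monotone Boolean formula by a valuation (a set of variables). -/
def MBF.sat {V : Type} (v : Set V) : MBF V → Prop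
  | .var p => p ∈ v
  | .top => True
  | .bot => False
  | .and φ ψ => φ.sat v ∧ ψ.sat v
  | .or φ ψ => φ.sat v ∨ ψ.sat v

/-- `φ` entails `ψ`: every valuation satisfying `φ` satisfies `ψ`. -/
def MBF.entails {V : Type} (φ ψ : MBF V) : Prop :=
  ∀ v : Set V, φ.sat v → ψ.sat v

/-- A rule: a pair of finite sets of consequences (premises and results). -/
structure Rule (C : Type) where
  pre : Finset C
  res : Finset C

/-- A rule `R` is applicable to a state `A` if `pre R ⊆ A` and `res R ⊄ A`. -/
def applicable {C : Type} (R : Rule C) (A : Set C) : Prop :=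
  ↑R.pre ⊆ A ∧ ¬ (↑R.res ⊆ A)

/-- Classical rule application: `A →_R B`. -/
def step {C : Type} (R : Rule C) (A B : Set C) : Prop :=
  applicable R A ∧ B = A ∪ ↑R.res

/-- One step with some rule from the fixed set of rules `Rs`. -/
def stepAny {C : Type} (Rs : Set (Rule C)) (A B : Set C) : Prop :=
  ∃ R ∈ Rs, step R A B

/-- Reflexive-transitive closure of classical rule application: `A →* B`. -/
def steps {C : Type} (Rs : Set (Rule C)) : Set C → Set C → Prop :=
  Relation.ReflTransGen (stepAny Rs)

/-- A state is saturated if no rule (from `Rs`) is applicable to it. -/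
def saturated {C : Type} (Rs : Set (Rule C)) (A : Set C) : Prop :=
  ∀ R ∈ Rs, ¬ applicable R A

/-- A pinpointing state: a labelling of a finite set of consequences with
monotone Boolean formulas (`none` = unlabelled). -/
structure PState (C V : Type) where
  lab : C → Option (MBF V)
  finite : {c : C | lab c ≠ none}.Finite

/-- The label of `α` in `A`, which is `⊥` if `α` is unlabelled. -/
def PState.labOf {C V : Type} (A : PState C V) (α : C) : MBF V :=
  (A.lab α).getD .bot

/-- `fm(X, A)`: the conjunction of the labels of the elements of `X`. -/
noncomputable def fm {C V : Type} (X : Finset C) (A : PState C V) : MBF V :=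
  (X.toList.map A.labOf).foldr .and .top

/-- `R` is pinpointing applicable to `A` if `fm(pre R, A)` does not entail `fm(res R, A)`. -/
def pinApplicable {C V : Type} (R : Rule C) (A : PState C V) : Prop :=
  ¬ (fm R.pre A).entails (fm R.res A)

open Classical in
/-- Pinpointing rule application `A ⇀_R B`: each `α ∈ res R` is relabelled with
`φ_α ∨ fm(pre R, A)` (with `φ_α = ⊥` if `α` was unlabelled); all other labels unchanged. -/
def pinStep {C V : Type} (R : Rule C) (A B : PState C V) : Prop :=
  pinApplicable R A ∧
  ∀ α : C, B.lab α =
    if α ∈ R.res then some ((A.labOf α).or (fm R.pre A)) else A.lab α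

/-- One pinpointing step with some rule from `Rs`. -/
def pinStepAny {C V : Type} (Rs : Set (Rule C)) (A B : PState C V) : Prop :=
  ∃ R ∈ Rs, pinStep R A B

/-- Reflexive-transitive closure of pinpointing rule application: `A ⇀* B`. -/
def pinSteps {C V : Type} (Rs : Set (Rule C)) : PState C V → PState C V → Prop :=
  Relation.ReflTransGen (pinStepAny Rs)

/-- A pinpointing state is pinpointing saturated if no rule is pinpointing applicable. -/
def pinSaturated {C V : Type} (Rs : Set (Rule C)) (A : PState C V) : Prop :=
  ∀ R ∈ Rs, ¬ pinApplicable R A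

/-- The projection `A_V` of a pinpointing state under a valuation `v`. -/
def PState.proj {C V : Type} (A : PState C V) (v : Set V) : Set C :=
  {α | ∃ φ, A.lab α = some φ ∧ φ.sat v}

open Classical in
/-- `O^pin`: the initial pinpointing state labelling each axiom `α ∈ O` with the
propositional variable `labv α`. -/
noncomputable def initPState {C V : Type} (labv : C → V) (O : Finset C) : PState C V :=
  ⟨fun α => if α ∈ O then some (.var (labv α)) else none,
   Set.Finite.subset O.finite_toSet (by
     intro c hc
     simp only [Set.mem_setOf_eq, ne_eq, ite_eq_right_iff, not_forall] at hc
     exact hc.choose)⟩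

lemma foldr_and_sat {V : Type} (v : Set V) (l : List (MBF V)) :
    (l.foldr MBF.and MBF.top).sat v ↔ ∀ φ ∈ l, φ.sat v := by
  induction l with
  | nil => simp [MBF.sat]
  | cons a t ih => simp [MBF.sat, ih]

lemma fm_sat {C V : Type} (X : Finset C) (A : PState C V) (v : Set V) :
    (fm X A).sat v ↔ ∀ α ∈ X, (A.labOf α).sat v := by
  rw [fm, foldr_and_sat]
  constructor
  · intro h α hα
    exact h _ (List.mem_map_of_mem (Finset.mem_toList.mpr hα))
  · intro h φ hφ
    obtain ⟨α, hα, rfl⟩ := List.mem_map.mp hφ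
    exact h α (Finset.mem_toList.mp hα)

lemma labOf_sat {C V : Type} (A : PState C V) (α : C) (v : Set V) :
    (A.labOf α).sat v ↔ α ∈ A.proj v := by
  unfold PState.labOf PState.proj
  cases hl : A.lab α with
  | none => simp [hl, MBF.sat]
  | some φ => simp [hl]

theorem stmt0 {C V : Type} (R : Rule C) (Apin Bpin : PState C V)
    (h : pinStep R Apin Bpin) (v : Set V) :
    step R (Apin.proj v) (Bpin.proj v) ∨ Apin.proj v = Bpin.proj v := by
  classical
  obtain ⟨_, hB⟩ := h
  have memB : ∀ α, α ∈ Bpin.proj v ↔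
      (if α ∈ R.res then (Apin.labOf α).sat v ∨ (fm R.pre Apin).sat v
       else α ∈ Apin.proj v) := by
    intro α
    by_cases hα : α ∈ R.res
    · simp only [hα, if_pos]
      constructor
      · rintro ⟨φ, hφ, hs⟩
        rw [hB α, if_pos hα] at hφ
        cases hφ
        exact hs
      · intro hs
        exact ⟨_, by rw [hB α, if_pos hα],
          show MBF.sat v ((Apin.labOf α).or (fm R.pre Apin)) from hs⟩
    · simp [PState.proj, hB α, hα]
  by_cases hpre : (fm R.pre Apin).sat v
  · -- B_v = A_v ∪ res
    have hBeq : Bpin.proj v = Apin.proj v ∪ ↑R.res := by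
      ext α
      rw [memB α]
      by_cases hα : α ∈ R.res <;> simp [hα, hpre]
    have hpresub : ↑R.pre ⊆ Apin.proj v := by
      intro α hα
      exact (labOf_sat Apin α v).mp ((fm_sat R.pre Apin v).mp hpre α hα)
    by_cases hres : ↑R.res ⊆ Apin.proj v
    · right
      rw [hBeq, Set.union_eq_self_of_subset_right hres]
    · left
      exact ⟨⟨hpresub, hres⟩, hBeq⟩
  · right
    ext α
    rw [memB α]
    by_cases hα : α ∈ R.res <;> simp [hα, hpre, labOf_sat]
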